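/- Let a > 0, q > 0 and c ≥ q/4 be real numbers, set T = 3/(q - 6c) and let f(t) = a·(((6c - q)/3)·t + 1)^{q/(2q - 12c)}. Define k : ℝ → ℝ by k(t) = (1/c)·((a/f(t))^{6c/q} - 1). Then k(0) = 0, 1 + c·k(t) > 0 for every t ∈ (T, +∞), and k satisfies the differential equation k′(t) = (a²/f(t)²)·(1/(1 + c·k(t))) at every t ∈ (T, +∞). -/

import Mathlib

/-- The deformation coefficient `k(t) = (1/c) ((a / f t)^(6c/q) - 1)` from the
proof of Theorem 5.4 of the paper satisfies `k 0 = 0`, `1 + c k t > 0` on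
`(T, ∞)`, and the ODE `k' = (a²/f²) (1 + c k)⁻¹` there. -/
theorem stmt_3 (a q c : ℝ) (ha : 0 < a) (hq : 0 < q) (hc : q / 4 ≤ c)
    (T : ℝ) (hT : T = 3 / (q - 6 * c)) (f k : ℝ → ℝ)
    (hf : ∀ t : ℝ, f t = a * ((6 * c - q) / 3 * t + 1) ^ (q / (2 * q - 12 * c)))
    (hk : ∀ t : ℝ, k t = (1 / c) * ((a / f t) ^ (6 * c / q) - 1)) :
    k 0 = 0 ∧
    ∀ t ∈ Set.Ioi T,
      0 < 1 + c * k t ∧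
      HasDerivAt k (a ^ 2 / (f t) ^ 2 * (1 / (1 + c * k t))) t := by
  have hc0 : 0 < c := lt_of_lt_of_le (by linarith) hc
  have hs : 0 < 6 * c - q := by linarith
  set b : ℝ := (6 * c - q) / 3 with hb
  have hb0 : 0 < b := by positivity
  set p : ℝ := q / (2 * q - 12 * c) with hp
  set α : ℝ := 3 * c / (6 * c - q) with hα
  have hk0 : k 0 = 0 := by
    rw [hk, hf]
    simp [Real.one_rpow, div_self ha.ne']
  refine ⟨hk0, ?_⟩
  intro t ht
  have hTlt : T < t := ht
  have hu : 0 < b * t + 1 := by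
    have h1 : b * T + 1 = 0 := by
      have hne : q - 6 * c ≠ 0 := by linarith
      rw [hT, hb]; field_simp; ring
    nlinarith [mul_lt_mul_of_pos_left hTlt hb0]
  have hexp : -p * (6 * c / q) = α := by
    have hne : 2 * q - 12 * c ≠ 0 := by linarith
    have h2 : 2 * q - 12 * c = -2 * (6 * c - q) := by ring
    rw [hp, hα, h2]; field_simp; ring
  have key : ∀ s : ℝ, 0 < b * s + 1 → k s = (1 / c) * ((b * s + 1) ^ α - 1) := by
    intro s hus
    rw [hk, hf]
    have h1 : a / (a * (b * s + 1) ^ p) = (b * s + 1) ^ (-p) := by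
      rw [Real.rpow_neg hus.le]
      field_simp
    rw [h1, ← Real.rpow_mul hus.le, hexp]
  have hpos : ∀ s : ℝ, 0 < b * s + 1 → 1 + c * k s = (b * s + 1) ^ α := by
    intro s hus
    rw [key s hus]
    field_simp; ring
  have h1ck : 0 < 1 + c * k t := by
    rw [hpos t hu]; exact Real.rpow_pos_of_pos hu _
  refine ⟨h1ck, ?_⟩
  -- the derivative of the nice formula
  have hlin : HasDerivAt (fun s : ℝ => b * s + 1) b t := by
    simpa using ((hasDerivAt_id t).const_mul b).add_const 1
  have hg : HasDerivAt (fun s : ℝ => (1 / c) * ((b * s + 1) ^ α - 1))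
      ((1 / c) * (b * α * (b * t + 1) ^ (α - 1))) t :=
    ((hlin.rpow_const (Or.inl hu.ne')).sub_const 1).const_mul (1 / c)
  have heq : k =ᶠ[nhds t] fun s : ℝ => (1 / c) * ((b * s + 1) ^ α - 1) := by
    have hopen : ∀ᶠ s in nhds t, 0 < b * s + 1 := by
      have hO : IsOpen {s : ℝ | 0 < b * s + 1} :=
        isOpen_lt continuous_const (by continuity)
      exact hO.mem_nhds hu
    filter_upwards [hopen] with s hus using key s hus
  have hval : a ^ 2 / (f t) ^ 2 * (1 / (1 + c * k t))
      = (1 / c) * (b * α * (b * t + 1) ^ (α - 1)) := by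
    rw [hpos t hu, hf]
    have hup : 0 < (b * t + 1) ^ p := Real.rpow_pos_of_pos hu _
    have hsq : (a * (b * t + 1) ^ p) ^ 2 = a ^ 2 * (b * t + 1) ^ (2 * p) := by
      rw [mul_pow, ← Real.rpow_natCast ((b * t + 1) ^ p) 2, ← Real.rpow_mul hu.le]
      congr 1
      push_cast
      ring
    rw [hsq]
    have h2 : a ^ 2 / (a ^ 2 * (b * t + 1) ^ (2 * p)) = (b * t + 1) ^ (-(2 * p)) := by
      rw [Real.rpow_neg hu.le]
      field_simp
    rw [h2, one_div, ← Real.rpow_neg hu.le, ← Real.rpow_add hu]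
    have hba : (1 / c) * (b * α) = 1 := by
      have hne' : c * 6 - q ≠ 0 := by linarith
      rw [hb, hα]; field_simp
    calc (b * t + 1) ^ (-(2 * p) + -α) = (b * t + 1) ^ (α - 1) := by
          congr 1
          rw [hp, hα]
          have hne : 2 * q - 12 * c ≠ 0 := by linarith
          rw [show 2 * q - 12 * c = -2 * (6 * c - q) by ring]
          field_simp; ring
      _ = (1 / c) * (b * α) * (b * t + 1) ^ (α - 1) := by rw [hba, one_mul]
      _ = (1 / c) * (b * α * (b * t + 1) ^ (α - 1)) := by ring
  exact hval ▸ hg.congr_of_eventuallyEq heq
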